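/- Let R be an associative (possibly noncommutative) ℝ-algebra, S a finite type, Λ ⊆ S with complement Λᶜ, and T a real matrix indexed by S whose Λ×Λ submatrix T_Λ is invertible. Let ψ̄, ψ : S → R. Define β : Λ → R by β_i = −Σ_{k∈Λ} Σ_{j∈Λᶜ} (T_Λ⁻¹)_{ik} T_{kj} ψ_j, define β̄ : Λ → R by β̄_i = −Σ_{j∈Λᶜ} Σ_{k∈Λ} ψ̄_j T_{jk} (T_Λ⁻¹)_{ki}, and let R^Λ = T_{Λᶜ} − T_{ΛᶜΛ} T_Λ⁻¹ T_{ΛΛᶜ} be the Schur complement. Then Σ_{i,j∈S} T_{ij} ψ̄_i ψ_j = Σ_{i,j∈Λ} (T_Λ)_{ij} (ψ̄_i − β̄_i)(ψ_j − β_j) + Σ_{i,j∈Λᶜ} (R^Λ)_{ij} ψ̄_i ψ_j. -/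

import Mathlib

/-- splitting a fermionic quadratic form: completion of the square
with the Schur complement, in a possibly noncommutative ℝ-algebra. -/
theorem fermionic_quadratic_form_split
    {R : Type*} [Ring R] [Algebra ℝ R] {S : Type*} [Fintype S] [DecidableEq S]
    (Λ : S → Prop) [DecidablePred Λ] (T : Matrix S S ℝ)
    (hTinv : IsUnit (T.submatrix (Subtype.val : {x // Λ x} → S) Subtype.val).det)
    (ψb ψ : S → R)
    (β βb : {x // Λ x} → R)
    (hβ : ∀ i, β i = -∑ k : {x // Λ x}, ∑ j : {x // ¬ Λ x},
      (((T.submatrix (Subtype.val : {x // Λ x} → S) Subtype.val)⁻¹ i k) * T k.1 j.1) • ψ j.1)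
    (hβb : ∀ i, βb i = -∑ j : {x // ¬ Λ x}, ∑ k : {x // Λ x},
      (T j.1 k.1 * ((T.submatrix (Subtype.val : {x // Λ x} → S) Subtype.val)⁻¹ k i)) • ψb j.1)
    (RΛ : Matrix {x // ¬ Λ x} {x // ¬ Λ x} ℝ)
    (hRΛ : RΛ = T.submatrix (Subtype.val : {x // ¬ Λ x} → S) Subtype.val -
      T.submatrix (Subtype.val : {x // ¬ Λ x} → S) (Subtype.val : {x // Λ x} → S) *
        (T.submatrix (Subtype.val : {x // Λ x} → S) Subtype.val)⁻¹ *
        T.submatrix (Subtype.val : {x // Λ x} → S) (Subtype.val : {x // ¬ Λ x} → S)) :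
    ∑ i : S, ∑ j : S, T i j • (ψb i * ψ j) =
      (∑ i : {x // Λ x}, ∑ j : {x // Λ x},
        T.submatrix (Subtype.val : {x // Λ x} → S) Subtype.val i j •
          ((ψb i.1 - βb i) * (ψ j.1 - β j))) +
      ∑ i : {x // ¬ Λ x}, ∑ j : {x // ¬ Λ x}, RΛ i j • (ψb i.1 * ψ j.1) := by
  classical
  set A := T.submatrix (Subtype.val : {x // Λ x} → S) Subtype.val with hAdef
  have hAA : A * A⁻¹ = 1 := Matrix.mul_nonsing_inv A hTinv
  have hA'A : A⁻¹ * A = 1 := Matrix.nonsing_inv_mul A hTinv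
  -- split of full sum
  have hsplit : ∀ g : S → R, (∑ i : S, g i)
      = (∑ i : {x // Λ x}, g i.1) + ∑ i : {x // ¬ Λ x}, g i.1 := fun g =>
    (Fintype.sum_subtype_add_sum_subtype Λ g).symm
  -- cross term a
  have ha' : ∀ u : {x // Λ x} → R,
      (∑ i : {x // Λ x}, ∑ j : {x // Λ x}, A i j • (u i * β j))
      = -∑ i : {x // Λ x}, ∑ j : {x // ¬ Λ x}, T i.1 j.1 • (u i * ψ j.1) := by
    intro u
    have L : (∑ i : {x // Λ x}, ∑ j : {x // Λ x}, A i j • (u i * β j))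
        = -∑ i : {x // Λ x}, ∑ j : {x // Λ x}, ∑ k : {x // Λ x}, ∑ l : {x // ¬ Λ x},
            (A i j * (A⁻¹ j k * T k.1 l.1)) • (u i * ψ l.1) := by
      simp only [hβ, mul_neg, smul_neg, Finset.mul_sum, Finset.smul_sum, mul_smul_comm,
        smul_smul, Finset.sum_neg_distrib]
    rw [L, neg_inj]
    refine Finset.sum_congr rfl fun i _ => ?_
    calc ∑ j : {x // Λ x}, ∑ k : {x // Λ x}, ∑ l : {x // ¬ Λ x},
            (A i j * (A⁻¹ j k * T k.1 l.1)) • (u i * ψ l.1)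
        = ∑ l : {x // ¬ Λ x}, ∑ j : {x // Λ x}, ∑ k : {x // Λ x},
            (A i j * (A⁻¹ j k * T k.1 l.1)) • (u i * ψ l.1) := by
          rw [show (∑ j : {x // Λ x}, ∑ k : {x // Λ x}, ∑ l : {x // ¬ Λ x},
              (A i j * (A⁻¹ j k * T k.1 l.1)) • (u i * ψ l.1))
            = ∑ j : {x // Λ x}, ∑ l : {x // ¬ Λ x}, ∑ k : {x // Λ x},
              (A i j * (A⁻¹ j k * T k.1 l.1)) • (u i * ψ l.1) from
            Finset.sum_congr rfl fun j _ => Finset.sum_comm]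
          exact Finset.sum_comm
      _ = ∑ l : {x // ¬ Λ x}, (∑ j : {x // Λ x}, ∑ k : {x // Λ x},
            A i j * (A⁻¹ j k * T k.1 l.1)) • (u i * ψ l.1) := by
          simp [Finset.sum_smul]
      _ = ∑ l : {x // ¬ Λ x}, T i.1 l.1 • (u i * ψ l.1) := by
          refine Finset.sum_congr rfl fun l _ => ?_
          congr 1
          calc ∑ j : {x // Λ x}, ∑ k : {x // Λ x}, A i j * (A⁻¹ j k * T k.1 l.1)
              = ∑ k : {x // Λ x}, (∑ j : {x // Λ x}, A i j * A⁻¹ j k) * T k.1 l.1 := by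
                rw [Finset.sum_comm]
                simp [Finset.sum_mul, mul_assoc]
            _ = ∑ k : {x // Λ x}, (1 : Matrix {x // Λ x} {x // Λ x} ℝ) i k * T k.1 l.1 := by
                simp only [← hAA, Matrix.mul_apply]
            _ = T i.1 l.1 := by simp [Matrix.one_apply]
  have ha : (∑ i : {x // Λ x}, ∑ j : {x // Λ x}, A i j • (ψb i.1 * β j))
      = -∑ i : {x // Λ x}, ∑ j : {x // ¬ Λ x}, T i.1 j.1 • (ψb i.1 * ψ j.1) :=
    ha' (fun i => ψb i.1)
  have hb : (∑ i : {x // Λ x}, ∑ j : {x // Λ x}, A i j • (βb i * ψ j.1))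
      = -∑ i : {x // ¬ Λ x}, ∑ j : {x // Λ x}, T i.1 j.1 • (ψb i.1 * ψ j.1) := by
    have L : (∑ i : {x // Λ x}, ∑ j : {x // Λ x}, A i j • (βb i * ψ j.1))
        = -∑ i : {x // Λ x}, ∑ j : {x // Λ x}, ∑ l : {x // ¬ Λ x}, ∑ k : {x // Λ x},
            (A i j * (T l.1 k.1 * A⁻¹ k i)) • (ψb l.1 * ψ j.1) := by
      simp only [hβb, neg_mul, smul_neg, Finset.sum_mul, smul_mul_assoc, Finset.smul_sum,
        smul_smul, Finset.sum_neg_distrib]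
    rw [L, neg_inj]
    calc ∑ i : {x // Λ x}, ∑ j : {x // Λ x}, ∑ l : {x // ¬ Λ x}, ∑ k : {x // Λ x},
            (A i j * (T l.1 k.1 * A⁻¹ k i)) • (ψb l.1 * ψ j.1)
        = ∑ i : {x // Λ x}, ∑ l : {x // ¬ Λ x}, ∑ j : {x // Λ x}, ∑ k : {x // Λ x},
            (A i j * (T l.1 k.1 * A⁻¹ k i)) • (ψb l.1 * ψ j.1) :=
          Finset.sum_congr rfl fun i _ => Finset.sum_comm
      _ = ∑ l : {x // ¬ Λ x}, ∑ i : {x // Λ x}, ∑ j : {x // Λ x}, ∑ k : {x // Λ x},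
            (A i j * (T l.1 k.1 * A⁻¹ k i)) • (ψb l.1 * ψ j.1) := Finset.sum_comm
      _ = ∑ l : {x // ¬ Λ x}, ∑ j : {x // Λ x}, ∑ i : {x // Λ x}, ∑ k : {x // Λ x},
            (A i j * (T l.1 k.1 * A⁻¹ k i)) • (ψb l.1 * ψ j.1) :=
          Finset.sum_congr rfl fun l _ => Finset.sum_comm
      _ = ∑ l : {x // ¬ Λ x}, ∑ j : {x // Λ x}, (∑ i : {x // Λ x}, ∑ k : {x // Λ x},
            A i j * (T l.1 k.1 * A⁻¹ k i)) • (ψb l.1 * ψ j.1) := by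
          simp [Finset.sum_smul]
      _ = ∑ l : {x // ¬ Λ x}, ∑ j : {x // Λ x}, T l.1 j.1 • (ψb l.1 * ψ j.1) := by
          refine Finset.sum_congr rfl fun l _ => Finset.sum_congr rfl fun j _ => ?_
          congr 1
          calc ∑ i : {x // Λ x}, ∑ k : {x // Λ x}, A i j * (T l.1 k.1 * A⁻¹ k i)
              = ∑ k : {x // Λ x}, T l.1 k.1 * (∑ i : {x // Λ x}, A⁻¹ k i * A i j) := by
                rw [Finset.sum_comm]
                refine Finset.sum_congr rfl fun k _ => ?_
                rw [Finset.mul_sum]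
                exact Finset.sum_congr rfl fun i _ => by ring
            _ = ∑ k : {x // Λ x}, T l.1 k.1 * (1 : Matrix {x // Λ x} {x // Λ x} ℝ) k j := by
                simp only [← hA'A, Matrix.mul_apply]
            _ = T l.1 j.1 := by simp [Matrix.one_apply]
  have hc : (∑ i : {x // Λ x}, ∑ j : {x // Λ x}, A i j • (βb i * β j))
      = ∑ i : {x // ¬ Λ x}, ∑ j : {x // ¬ Λ x},
          ((T.submatrix (Subtype.val : {x // ¬ Λ x} → S) (Subtype.val : {x // Λ x} → S) * A⁻¹ *
            T.submatrix (Subtype.val : {x // Λ x} → S) (Subtype.val : {x // ¬ Λ x} → S)) i j)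
            • (ψb i.1 * ψ j.1) := by
    rw [ha' βb]
    have L : (∑ i : {x // Λ x}, ∑ l : {x // ¬ Λ x}, T i.1 l.1 • (βb i * ψ l.1))
        = -∑ i : {x // Λ x}, ∑ l : {x // ¬ Λ x}, ∑ p : {x // ¬ Λ x}, ∑ k : {x // Λ x},
            (T i.1 l.1 * (T p.1 k.1 * A⁻¹ k i)) • (ψb p.1 * ψ l.1) := by
      simp only [hβb, neg_mul, smul_neg, Finset.sum_mul, smul_mul_assoc, Finset.smul_sum,
        smul_smul, Finset.sum_neg_distrib]
    rw [L, neg_neg]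
    calc ∑ i : {x // Λ x}, ∑ l : {x // ¬ Λ x}, ∑ p : {x // ¬ Λ x}, ∑ k : {x // Λ x},
            (T i.1 l.1 * (T p.1 k.1 * A⁻¹ k i)) • (ψb p.1 * ψ l.1)
        = ∑ i : {x // Λ x}, ∑ p : {x // ¬ Λ x}, ∑ l : {x // ¬ Λ x}, ∑ k : {x // Λ x},
            (T i.1 l.1 * (T p.1 k.1 * A⁻¹ k i)) • (ψb p.1 * ψ l.1) :=
          Finset.sum_congr rfl fun i _ => Finset.sum_comm
      _ = ∑ p : {x // ¬ Λ x}, ∑ i : {x // Λ x}, ∑ l : {x // ¬ Λ x}, ∑ k : {x // Λ x},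
            (T i.1 l.1 * (T p.1 k.1 * A⁻¹ k i)) • (ψb p.1 * ψ l.1) := Finset.sum_comm
      _ = ∑ p : {x // ¬ Λ x}, ∑ l : {x // ¬ Λ x}, ∑ i : {x // Λ x}, ∑ k : {x // Λ x},
            (T i.1 l.1 * (T p.1 k.1 * A⁻¹ k i)) • (ψb p.1 * ψ l.1) :=
          Finset.sum_congr rfl fun p _ => Finset.sum_comm
      _ = ∑ p : {x // ¬ Λ x}, ∑ l : {x // ¬ Λ x}, (∑ i : {x // Λ x}, ∑ k : {x // Λ x},
            T i.1 l.1 * (T p.1 k.1 * A⁻¹ k i)) • (ψb p.1 * ψ l.1) := by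
          simp [Finset.sum_smul]
      _ = ∑ p : {x // ¬ Λ x}, ∑ l : {x // ¬ Λ x},
            ((T.submatrix (Subtype.val : {x // ¬ Λ x} → S) (Subtype.val : {x // Λ x} → S) * A⁻¹ *
              T.submatrix (Subtype.val : {x // Λ x} → S) (Subtype.val : {x // ¬ Λ x} → S)) p l)
              • (ψb p.1 * ψ l.1) := by
          refine Finset.sum_congr rfl fun p _ => Finset.sum_congr rfl fun l _ => ?_
          congr 1
          calc ∑ i : {x // Λ x}, ∑ k : {x // Λ x}, T i.1 l.1 * (T p.1 k.1 * A⁻¹ k i)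
              = ∑ i : {x // Λ x}, ∑ k : {x // Λ x}, (T p.1 k.1 * A⁻¹ k i) * T i.1 l.1 :=
                Finset.sum_congr rfl fun i _ => Finset.sum_congr rfl fun k _ => by ring
            _ = (T.submatrix (Subtype.val : {x // ¬ Λ x} → S) (Subtype.val : {x // Λ x} → S) * A⁻¹ *
              T.submatrix (Subtype.val : {x // Λ x} → S) (Subtype.val : {x // ¬ Λ x} → S)) p l := by
                simp [Matrix.mul_apply, Matrix.submatrix_apply, Finset.sum_mul]
  -- expand RHS first term
  have hexp : (∑ i : {x // Λ x}, ∑ j : {x // Λ x}, A i j • ((ψb i.1 - βb i) * (ψ j.1 - β j)))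
      = (∑ i : {x // Λ x}, ∑ j : {x // Λ x}, A i j • (ψb i.1 * ψ j.1))
        - (∑ i : {x // Λ x}, ∑ j : {x // Λ x}, A i j • (ψb i.1 * β j))
        - (∑ i : {x // Λ x}, ∑ j : {x // Λ x}, A i j • (βb i * ψ j.1))
        + (∑ i : {x // Λ x}, ∑ j : {x // Λ x}, A i j • (βb i * β j)) := by
    simp only [mul_sub, sub_mul, smul_sub, Finset.sum_sub_distrib]
    abel
  rw [hexp, ha, hb, hc, hRΛ]
  simp only [hsplit]
  simp only [Matrix.sub_apply, sub_smul, Finset.sum_sub_distrib, Finset.sum_add_distrib, Matrix.submatrix_apply, hAdef]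
  abel!
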